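/- For any β > 0, any probability vector p_t ∈ Δ([K]), and any loss vector ℓ_t ∈ ℝ^K satisfying β·p_{t,i}·ℓ_{t,i} ≥ -1/2 for all i, the stability term of log-barrier FTRL satisfies: max over p ∈ Δ([K]) of (⟨p_t - p, ℓ_t⟩ - D_ψ(p, p_t)) ≤ Σ_i β·p_{t,i}²·ℓ_{t,i}², where ψ(p) = (1/β)·Σ_i ln(1/p_i) and D_ψ is the Bregman divergence of ψ. -/

import Mathlib

open Finset Real


lemma key_neg : ∀ a ∈ Set.Icc (-(1/2):ℝ) 0, a - a^2 ≤ Real.log (1+a) := by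
  have hderiv : ∀ a ∈ Set.Ioo (-(1/2):ℝ) 0,
      HasDerivAt (fun a : ℝ => Real.log (1+a) - (a - a^2)) (1/(1+a) - (1 - 2*a)) a := by
    intro a ha
    have h1 : (0:ℝ) < 1 + a := by
      rcases ha with ⟨h, _⟩; linarith
    have hlog : HasDerivAt (fun a : ℝ => Real.log (1+a)) (1/(1+a)) a := by
      have := (Real.hasDerivAt_log h1.ne').comp a ((hasDerivAt_id a).const_add 1)
      simpa [one_div, Function.comp_def] using this
    have hpoly : HasDerivAt (fun a : ℝ => a - a^2) (1 - 2*a) a := by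
      have := ((hasDerivAt_id a).sub ((hasDerivAt_pow 2 a)))
      simpa [mul_comm, Pi.sub_def] using this
    exact hlog.sub hpoly
  have hcont : ContinuousOn (fun a : ℝ => Real.log (1+a) - (a - a^2)) (Set.Icc (-(1/2)) 0) := by
    apply ContinuousOn.sub
    · apply ContinuousOn.log
      · fun_prop
      · intro x hx
        rcases hx with ⟨h, _⟩; intro h0; linarith [h0]
    · fun_prop
  have hanti : AntitoneOn (fun a : ℝ => Real.log (1+a) - (a - a^2)) (Set.Icc (-(1/2)) 0) := by
    apply antitoneOn_of_deriv_nonpos (convex_Icc _ _) hcont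
    · intro x hx
      rw [interior_Icc] at hx
      exact ((hderiv x hx).differentiableAt).differentiableWithinAt
    · intro x hx
      rw [interior_Icc] at hx
      rw [(hderiv x hx).deriv]
      rcases hx with ⟨h1, h2⟩
      have h3 : (0:ℝ) < 1 + x := by linarith
      rw [div_sub' h3.ne', div_nonpos_iff]
      right
      constructor
      · nlinarith
      · linarith
  intro a ha
  have h0 : (0:ℝ) ∈ Set.Icc (-(1/2):ℝ) 0 := by constructor <;> norm_num
  have := hanti ha h0 ha.2
  simp at this
  linarith [this]

lemma key1 (a : ℝ) (ha : a ≥ -(1/2)) : a - a^2 ≤ Real.log (1+a) := by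
  rcases le_or_gt a 0 with h | h
  · exact key_neg a ⟨ha, h⟩
  · have h1 : (0:ℝ) < 1 + a := by linarith
    have h2 : Real.log (1/(1+a)) ≤ 1/(1+a) - 1 := Real.log_le_sub_one_of_pos (by positivity)
    rw [Real.log_div one_ne_zero h1.ne', Real.log_one] at h2
    have h3 : 1 - 1/(1+a) ≤ Real.log (1+a) := by linarith
    have hinv : (1/(1+a))*(1+a) = 1 := by field_simp
    have h4 : a - a^2 ≤ 1 - 1/(1+a) := by
      nlinarith [hinv, mul_pos h h, mul_pos (mul_pos h h) h, one_div_pos.mpr h1]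
    linarith

lemma term_ineq (β P Q L : ℝ) (hβ : 0 < β) (hP : 0 < P) (hQ : 0 < Q)
    (ha : β * P * L ≥ -(1/2)) :
    (P - Q) * L - (1/β) * (Real.log (P/Q) + Q/P - 1) ≤ β * P^2 * L^2 := by
  set a := β * P * L with hadef
  set x := Q / P with hxdef
  have hx : 0 < x := by positivity
  have h1a : (0:ℝ) < 1 + a := by linarith
  have hlog1 : Real.log (x*(1+a)) ≤ x*(1+a) - 1 := Real.log_le_sub_one_of_pos (by positivity)
  rw [Real.log_mul hx.ne' h1a.ne'] at hlog1
  have hkey : a - a^2 ≤ Real.log (1+a) := key1 a ha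
  have hmain : a*(1-x) - (x - 1 - Real.log x) ≤ a^2 := by nlinarith [hlog1, hkey]
  have hlogpq : Real.log (P/Q) = - Real.log x := by
    rw [hxdef, Real.log_div hQ.ne' hP.ne', Real.log_div hP.ne' hQ.ne']; ring
  have expand : (P - Q) * L - (1/β) * (Real.log (P/Q) + Q/P - 1)
      = (1/β) * (a*(1-x) - (x - 1 - Real.log x)) := by
    rw [hlogpq, hadef, hxdef]
    field_simp
    ring
  have expand2 : β * P^2 * L^2 = (1/β) * a^2 := by
    rw [hadef]; field_simp
  rw [expand, expand2]
  exact mul_le_mul_of_nonneg_left hmain (by positivity)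

/-- Stability of the log-barrier FTRL step (Lemma "Stability under log barrier"). -/
theorem log_barrier_stability (K : ℕ) (β : ℝ) (hβ : 0 < β)
    (p ℓ : Fin K → ℝ) (hp : ∀ i, 0 < p i) (hps : ∑ i, p i = 1)
    (hℓ : ∀ i, β * p i * ℓ i ≥ -(1/2))
    (q : Fin K → ℝ) (hq : ∀ i, 0 < q i) (hqs : ∑ i, q i = 1) :
    (∑ i, (p i - q i) * ℓ i) -
      (1/β) * (∑ i, (Real.log (p i / q i) + q i / p i - 1))
    ≤ ∑ i, β * (p i)^2 * (ℓ i)^2 := by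
  rw [Finset.mul_sum, ← Finset.sum_sub_distrib]
  apply Finset.sum_le_sum
  intro i _
  exact term_ineq β (p i) (q i) (ℓ i) hβ (hp i) (hq i) (hℓ i)
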